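/- Let G be a finite graph on n vertices with minimum degree δ(G) > n/2 (equivalently, 2δ(G) > n). Then G admits an orientation of radius at most 4 and an orientation of diameter at most 8. -/

import Mathlib

open SimpleGraph Finset

variable {V : Type*}

/-- `o` is an orientation of `G`: each edge of `G` gets exactly one direction. -/
def IsOrientation (G : SimpleGraph V) (o : V → V → Prop) : Prop :=
  (∀ x y, o x y → G.Adj x y) ∧ (∀ x y, G.Adj x y → (o x y ∨ o y x)) ∧
    (∀ x y, o x y → ¬ o y x)

/-- There is a directed path (with respect to `o`) from `x` to `y` of length at most `n`. -/
def DPathLE (o : V → V → Prop) (n : ℕ) (x y : V) : Prop :=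
  ∃ m ≤ n, ∃ f : ℕ → V, f 0 = x ∧ f m = y ∧ (∀ i < m, o (f i) (f (i + 1))) ∧
    (∀ i ≤ m, ∀ j ≤ m, f i = f j → i = j)

/-- `G` admits an orientation of radius at most `R`. -/
def OrientRadiusLE (G : SimpleGraph V) (R : ℕ) : Prop :=
  ∃ o : V → V → Prop, IsOrientation G o ∧
    ∃ u : V, ∀ v : V, DPathLE o R u v ∧ DPathLE o R v u

/-- `G` admits an orientation of diameter at most `D`. -/
def OrientDiamLE (G : SimpleGraph V) (D : ℕ) : Prop :=
  ∃ o : V → V → Prop, IsOrientation G o ∧ ∀ x y : V, DPathLE o D x y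

/-- The edge `e` lies on a cycle of `G` of length at most `n`. -/
def InCycleLE (G : SimpleGraph V) (e : Sym2 V) (n : ℕ) : Prop :=
  ∃ (v : V) (c : G.Walk v v), c.IsCycle ∧ e ∈ c.edges ∧ c.length ≤ n

/-- `G` is bridgeless: no edge is a cut edge. -/
def Bridgeless (G : SimpleGraph V) : Prop :=
  ∀ e ∈ G.edgeSet, ¬ G.IsBridge e

/-- `c` is a rainbow `k`-edge-coloring of `G`: every two distinct vertices are joined
by a path whose edges receive pairwise distinct colors. -/
def IsRainbowColoring (G : SimpleGraph V) (k : ℕ) (c : Sym2 V → Fin k) : Prop :=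
  ∀ x y : V, x ≠ y → ∃ p : G.Walk x y, p.IsPath ∧ (p.edges.map c).Nodup

/-- The rainbow connection number of `G` is at most `k`. -/
def RcLE (G : SimpleGraph V) (k : ℕ) : Prop :=
  ∃ c : Sym2 V → Fin k, IsRainbowColoring G k c

section PRIVATEAUX
private lemma dpath_mono {o : V → V → Prop} {n n' : ℕ} {x y : V} (hp : DPathLE o n x y)
    (hn : n ≤ n') : DPathLE o n' x y := by
  obtain ⟨m, hm, f, h1, h2, h3, h4⟩ := hp
  exact ⟨m, le_trans hm hn, f, h1, h2, h3, h4⟩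

private lemma splice_step (o : V → V → Prop) {m i j : ℕ} {f : ℕ → V}
    (hij : i < j) (hjm : j ≤ m) (heq : f i = f j)
    (hf : ∀ k < m, o (f k) (f (k + 1)))
    (ih : ∀ m' , m' < m → ∀ g : ℕ → V, (∀ k < m', o (g k) (g (k + 1))) →
      DPathLE o m' (g 0) (g m')) :
    DPathLE o m (f 0) (f m) := by
  set d := j - i with hd
  set m' := m - d with hm'
  set g : ℕ → V := fun k => if k ≤ i then f k else f (k + d) with hg
  have hwalk : ∀ k < m', o (g k) (g (k + 1)) := by
    intro k hk
    by_cases h1 : k + 1 ≤ i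
    · have h2 : k ≤ i := by omega
      simp only [hg, if_pos h2, if_pos h1]
      exact hf k (by omega)
    · by_cases h2 : k ≤ i
      · have hk_eq : k = i := by omega
        have e1 : g k = f j := by simp only [hg, if_pos h2]; rw [hk_eq, heq]
        have e2 : g (k + 1) = f (j + 1) := by
          simp only [hg, if_neg h1]; congr 1; omega
        rw [e1, e2]; exact hf j (by omega)
      · have e1 : g k = f (k + d) := by simp only [hg, if_neg h2]
        have e2 : g (k + 1) = f (k + d + 1) := by simp only [hg, if_neg h1]; congr 1; omega
        rw [e1, e2]; exact hf (k + d) (by omega)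
  have h0 : g 0 = f 0 := by simp [hg]
  have hlast : g m' = f m := by
    by_cases hc : m' ≤ i
    · have h1 : m' = i := by omega
      have h2 : j = m := by omega
      have e : g m' = f m' := by simp only [hg]; rw [if_pos hc]
      rw [e, h1, heq, h2]
    · simp only [hg, if_neg hc]; congr 1; omega
  have hres := ih m' (by omega) g hwalk
  rw [h0, hlast] at hres
  exact dpath_mono hres (by omega)

private lemma dwalk_to_dpath (o : V → V → Prop) :
    ∀ m, ∀ f : ℕ → V, (∀ i < m, o (f i) (f (i + 1))) → DPathLE o m (f 0) (f m) := by
  intro m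
  induction m using Nat.strong_induction_on with
  | _ m ih =>
    intro f hf
    by_cases hinj : ∀ i ≤ m, ∀ j ≤ m, f i = f j → i = j
    · exact ⟨m, le_refl m, f, rfl, rfl, hf, hinj⟩
    · push_neg at hinj
      obtain ⟨i, hi, j, hj, hfij, hne⟩ := hinj
      rcases Nat.lt_or_ge i j with hc | hc
      · exact splice_step o hc hj hfij hf ih
      · exact splice_step o (show j < i by omega) hi hfij.symm hf ih

private lemma dpath_comp {o : V → V → Prop} {a b : ℕ} {x y z : V}
    (h1 : DPathLE o a x y) (h2 : DPathLE o b y z) : DPathLE o (a + b) x z := by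
  obtain ⟨m1, hm1, f, hf0, hf1, hfw, -⟩ := h1
  obtain ⟨m2, hm2, g, hg0, hg1, hgw, -⟩ := h2
  set ff : ℕ → V := fun k => if k < m1 then f k else g (k - m1) with hff
  have hfix : ∀ k ≤ m1, ff k = f k := by
    intro k hk
    rcases lt_or_eq_of_le hk with hk' | hk'
    · simp [hff, hk']
    · subst hk'
      simp only [hff, lt_irrefl, if_neg (lt_irrefl _), Nat.sub_self, hg0]
      rw [hf1]
  have hwalk : ∀ k < m1 + m2, o (ff k) (ff (k + 1)) := by
    intro k hk
    by_cases hkm : k + 1 ≤ m1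
    · rw [hfix k (by omega), hfix (k + 1) hkm]
      exact hfw k (by omega)
    · have e1 : ff k = g (k - m1) := by simp only [hff, if_neg (show ¬ k < m1 by omega)]
      have e2 : ff (k + 1) = g (k - m1 + 1) := by
        simp only [hff, if_neg (show ¬ k + 1 < m1 by omega)]; congr 1; omega
      rw [e1, e2]
      exact hgw (k - m1) (by omega)
  have h0 : ff 0 = x := by rw [hfix 0 (by omega), hf0]
  have hl : ff (m1 + m2) = z := by
    simp only [hff, if_neg (show ¬ m1 + m2 < m1 by omega), Nat.add_sub_cancel_left]
    exact hg1
  have hres := dwalk_to_dpath o (m1 + m2) ff hwalk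
  rw [h0, hl] at hres
  exact dpath_mono hres (by omega)

private lemma dpath_zero (o : V → V → Prop) (x : V) : DPathLE o 0 x x :=
  ⟨0, le_rfl, fun _ => x, rfl, rfl, by omega, by omega⟩

private lemma dpath_one {o : V → V → Prop} {x y : V} (hxy : o x y) : DPathLE o 1 x y := by
  have hw : ∀ i < 1, o ((fun k => if k = 0 then x else y) i)
      ((fun k => if k = 0 then x else y) (i + 1)) := by
    intro i hi
    have h0 : i = 0 := by omega
    subst h0
    simpa using hxy
  have hres := dwalk_to_dpath o 1 (fun k => if k = 0 then x else y) hw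
  simpa using hres

private lemma common_nbr [Fintype V] (G : SimpleGraph V) [DecidableRel G.Adj]
    (h : Fintype.card V < 2 * G.minDegree) (x y a b : V) (hab : a ≠ b)
    (hxa : ¬ G.Adj x a) (hya : ¬ G.Adj y a) (hxb : ¬ G.Adj x b) (hyb : ¬ G.Adj y b)
    (z : V) : ∃ c, G.Adj x c ∧ G.Adj y c ∧ c ≠ z := by
  classical
  have hsub : G.neighborFinset x ∪ G.neighborFinset y ⊆ univ \ {a, b} := by
    intro c hc
    simp only [mem_union, mem_neighborFinset] at hc
    simp only [mem_sdiff, mem_univ, true_and, mem_insert, mem_singleton]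
    rintro (rfl | rfl) <;> tauto
  have hcard_union : (G.neighborFinset x ∪ G.neighborFinset y).card ≤ Fintype.card V - 2 := by
    calc (G.neighborFinset x ∪ G.neighborFinset y).card
        ≤ (univ \ ({a, b} : Finset V)).card := card_le_card hsub
      _ = Fintype.card V - 2 := by
          rw [card_sdiff_of_subset (subset_univ _), card_univ]
          congr 1
          rw [card_insert_of_notMem (by simpa using hab), card_singleton]
  have hdx : G.minDegree ≤ (G.neighborFinset x).card := by
    rw [card_neighborFinset_eq_degree]; exact G.minDegree_le_degree x
  have hdy : G.minDegree ≤ (G.neighborFinset y).card := by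
    rw [card_neighborFinset_eq_degree]; exact G.minDegree_le_degree y
  have hiu := Finset.card_inter_add_card_union (G.neighborFinset x) (G.neighborFinset y)
  have h2 : 1 < (G.neighborFinset x ∩ G.neighborFinset y).card := by omega
  obtain ⟨c, hc, hcz⟩ := Finset.exists_mem_ne h2 z
  rw [mem_inter, mem_neighborFinset, mem_neighborFinset] at hc
  exact ⟨c, hc.1, hc.2, hcz⟩

private lemma common_nbr0 [Fintype V] (G : SimpleGraph V) [DecidableRel G.Adj]
    (h : Fintype.card V < 2 * G.minDegree) (x y : V) : ∃ c, G.Adj x c ∧ G.Adj y c := by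
  classical
  have hcard_union : (G.neighborFinset x ∪ G.neighborFinset y).card ≤ Fintype.card V := by
    calc (G.neighborFinset x ∪ G.neighborFinset y).card ≤ (univ : Finset V).card :=
        card_le_card (subset_univ _)
      _ = Fintype.card V := card_univ
  have hdx : G.minDegree ≤ (G.neighborFinset x).card := by
    rw [card_neighborFinset_eq_degree]; exact G.minDegree_le_degree x
  have hdy : G.minDegree ≤ (G.neighborFinset y).card := by
    rw [card_neighborFinset_eq_degree]; exact G.minDegree_le_degree y
  have hiu := Finset.card_inter_add_card_union (G.neighborFinset x) (G.neighborFinset y)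
  have h2 : 0 < (G.neighborFinset x ∩ G.neighborFinset y).card := by omega
  obtain ⟨c, hc⟩ := Finset.card_pos.mp h2
  rw [mem_inter, mem_neighborFinset, mem_neighborFinset] at hc
  exact ⟨c, hc.1, hc.2⟩

open Classical in
private noncomputable def dirD (u w : V) (Au Aw Fp : V → Prop) (iv ov : V → V)
    (tie : V → V → Prop) (x y : V) : Prop :=
  if x = u then (if y = w then False else True)
  else if y = u then (if x = w then True else False)
  else if x = w then False
  else if y = w then True
  else if Fp x then
    (if Fp y then tie x y
     else if y = ov x then True
     else if y = iv x then False
     else tie x y)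
  else if Fp y then
    (if x = ov y then False
     else if x = iv y then True
     else tie x y)
  else if Aw x ∧ ¬ Aw y then False
  else if Aw y ∧ ¬ Aw x then True
  else if Au x ∧ ¬ Au y then True
  else if Au y ∧ ¬ Au x then False
  else tie x y

private lemma dirD_flip (u w : V) (Au Aw Fp : V → Prop) (iv ov : V → V)
    (tie : V → V → Prop) (huw : u ≠ w)
    (htie : ∀ a b : V, a ≠ b → (tie a b ↔ ¬ tie b a))
    {x y : V} (hxy : x ≠ y) :
    dirD u w Au Aw Fp iv ov tie x y ↔ ¬ dirD u w Au Aw Fp iv ov tie y x := by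
  have t1 : tie x y ↔ ¬ tie y x := htie x y hxy
  unfold dirD
  by_cases h1 : x = u
  · rw [if_pos h1, if_neg (show ¬ y = u from fun hh => hxy (h1.trans hh.symm)), if_pos h1]
    by_cases h4 : y = w
    · rw [if_pos h4, if_pos h4]; simp
    · rw [if_neg h4, if_neg h4]; simp
  · by_cases h2 : y = u
    · rw [if_neg h1, if_pos h2, if_pos h2]
      by_cases h3 : x = w
      · rw [if_pos h3, if_pos h3]; simp
      · rw [if_neg h3, if_neg h3]; simp
    · rw [if_neg h1, if_neg h2, if_neg h2, if_neg h1]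
      by_cases h3 : x = w
      · rw [if_pos h3, if_neg (show ¬ y = w from fun hh => hxy (h3.trans hh.symm)), if_pos h3]
        simp
      · rw [if_neg h3]
        by_cases h4 : y = w
        · rw [if_pos h4, if_pos h4]; simp
        · rw [if_neg h4, if_neg h4, if_neg h3]
          by_cases h5 : Fp x
          · by_cases h6 : Fp y
            · rw [if_pos h5, if_pos h6, if_pos h6, if_pos h5]; exact t1
            · rw [if_pos h5, if_neg h6, if_neg h6, if_pos h5]
              by_cases hA : y = ov x
              · rw [if_pos hA, if_pos hA]; simp
              · rw [if_neg hA, if_neg hA]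
                by_cases hB : y = iv x
                · rw [if_pos hB, if_pos hB]; simp
                · rw [if_neg hB, if_neg hB]; exact t1
          · by_cases h6 : Fp y
            · rw [if_neg h5, if_pos h6, if_pos h6, if_neg h5]
              by_cases hA : x = ov y
              · rw [if_pos hA, if_pos hA]; simp
              · rw [if_neg hA, if_neg hA]
                by_cases hB : x = iv y
                · rw [if_pos hB, if_pos hB]; simp
                · rw [if_neg hB, if_neg hB]; exact t1
            · rw [if_neg h5, if_neg h6, if_neg h6, if_neg h5]
              by_cases a1 : Aw x <;> by_cases a2 : Aw y <;>
                by_cases a3 : Au x <;> by_cases a4 : Au y <;>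
                  simp [a1, a2, a3, a4, t1]

end PRIVATEAUX

/-- A graph on `n` vertices with minimum degree `δ(G) > n/2` admits an
orientation of radius at most `4` and an orientation of diameter at most `8`. -/
theorem oriented_bounds_large_min_degree [Fintype V] (G : SimpleGraph V)
    [DecidableRel G.Adj] (h : Fintype.card V < 2 * G.minDegree) :
    OrientRadiusLE G 4 ∧ OrientDiamLE G 8 := by
  classical
  have hne : Nonempty V := by
    by_contra hemp
    rw [not_nonempty_iff] at hemp
    have h0 : G.minDegree = 0 := by
      simp [SimpleGraph.minDegree, Finset.univ_eq_empty]
    rw [h0] at h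
    have : Fintype.card V = 0 := Fintype.card_eq_zero
    omega
  obtain ⟨u⟩ := hne
  have hc1 : 1 ≤ Fintype.card V := Fintype.card_pos_iff.mpr ⟨u⟩
  have hδ1 : 1 ≤ G.minDegree := by omega
  have hdegu : 0 < G.degree u := lt_of_lt_of_le hδ1 (G.minDegree_le_degree u)
  obtain ⟨w, hw⟩ := (G.degree_pos_iff_exists_adj u).mp hdegu
  have huw : u ≠ w := G.ne_of_adj hw
  set Fp : V → Prop := fun v => ¬ G.Adj u v ∧ ¬ G.Adj w v ∧ v ≠ u ∧ v ≠ w with hFp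
  have hex : ∀ v : V, ∃ oc ic : V,
      Fp v → (G.Adj v oc ∧ G.Adj w oc ∧ oc ≠ u ∧ G.Adj v ic ∧ G.Adj u ic ∧ ic ≠ oc) := by
    intro v
    by_cases hv : Fp v
    · obtain ⟨hvu, hvw, hvnu, hvnw⟩ := hv
      obtain ⟨oc, ho1, ho2, ho3⟩ := common_nbr G h v w v w hvnw G.irrefl hvw
        (fun hh => hvw hh.symm) G.irrefl u
      obtain ⟨ic, hi1, hi2, hi3⟩ := common_nbr G h v u v u hvnu G.irrefl hvu
        (fun hh => hvu hh.symm) G.irrefl oc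
      exact ⟨oc, ic, fun _ => ⟨ho1, ho2, ho3, hi1, hi2, hi3⟩⟩
    · exact ⟨v, v, fun hv' => absurd hv' hv⟩
  choose ov iv hpv using hex
  let e : V ≃ Fin (Fintype.card V) := Fintype.equivFin V
  set tie : V → V → Prop := fun a b => (e a : ℕ) < (e b : ℕ) with htiedef
  have htie : ∀ a b : V, a ≠ b → (tie a b ↔ ¬ tie b a) := by
    intro a b hab
    have hne2 : (e a : ℕ) ≠ (e b : ℕ) := fun hh => hab (e.injective (Fin.ext hh))
    simp only [htiedef]
    omega
  set D : V → V → Prop := dirD u w (G.Adj u) (G.Adj w) Fp iv ov tie with hD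
  have hflip : ∀ {x y : V}, x ≠ y → (D x y ↔ ¬ D y x) :=
    fun {x y} hxy => dirD_flip u w (G.Adj u) (G.Adj w) Fp iv ov tie huw htie hxy
  set o : V → V → Prop := fun x y => G.Adj x y ∧ D x y with ho
  have horient : IsOrientation G o := by
    refine ⟨fun x y hxy => hxy.1, fun x y hxy => ?_, fun x y hxy hyx => ?_⟩
    · by_cases hd : D x y
      · exact Or.inl ⟨hxy, hd⟩
      · refine Or.inr ⟨hxy.symm, ?_⟩
        by_contra hd2
        exact hd ((hflip (G.ne_of_adj hxy)).mpr hd2)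
    · exact (hflip (G.ne_of_adj hxy.1)).mp hxy.2 hyx.2
  -- basic directed edges
  have oWU : o w u := ⟨hw.symm, by simp [hD, dirD, Ne.symm huw]⟩
  have oUC : ∀ c : V, G.Adj u c → c ≠ w → o u c := by
    intro c hc hcw
    exact ⟨hc, by simp [hD, dirD, hcw]⟩
  have oCW : ∀ c : V, G.Adj w c → c ≠ u → o c w := by
    intro c hc hcu
    have hcw : c ≠ w := fun hh => G.irrefl (hh ▸ hc)
    exact ⟨hc.symm, by simp [hD, dirD, hcu, hcw, Ne.symm huw]⟩
  have oCV : ∀ c v : V, G.Adj u c → c ≠ w → ¬ G.Adj u v → G.Adj w v → v ≠ u →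
      G.Adj c v → o c v := by
    intro c v hc hcw hv hwv hvu hcv
    have hcu : c ≠ u := fun hh => G.irrefl (hh ▸ hc)
    have hvw : v ≠ w := fun hh => G.irrefl (hh ▸ hwv)
    have hFc : ¬ Fp c := fun hF => hF.1 hc
    have hFv : ¬ Fp v := fun hF => hF.2.1 hwv
    refine ⟨hcv, ?_⟩
    by_cases hwc : G.Adj w c
    · simp [hD, dirD, hcu, hcw, hvu, hvw, hFc, hFv, hwv, hwc, hc, hv]
    · simp [hD, dirD, hcu, hcw, hvu, hvw, hFc, hFv, hwv, hwc, hc, hv]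
  have oVC : ∀ v c : V, G.Adj u v → ¬ G.Adj w v → v ≠ w → G.Adj v c → G.Adj w c →
      c ≠ u → o v c := by
    intro v c hv hwv hvw hvc hwc hcu
    have hvu : v ≠ u := fun hh => G.irrefl (hh ▸ hv)
    have hcw : c ≠ w := fun hh => G.irrefl (hh ▸ hwc)
    have hFv : ¬ Fp v := fun hF => hF.1 hv
    have hFc : ¬ Fp c := fun hF => hF.2.1 hwc
    exact ⟨hvc, by simp [hD, dirD, hvu, hvw, hcu, hcw, hFv, hFc, hwv, hwc]⟩
  have oIV : ∀ v : V, Fp v → o (iv v) v := by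
    intro v hFv
    obtain ⟨ho1, ho2, ho3, hi1, hi2, hi3⟩ := hpv v hFv
    obtain ⟨hvu', hvw', hvnu, hvnw⟩ := id hFv
    have e1 : iv v ≠ u := fun hh => G.irrefl (hh ▸ hi2)
    have e2 : iv v ≠ w := fun hh => hvw' (hh ▸ hi1).symm
    have e3 : ¬ Fp (iv v) := fun hF => hF.1 hi2
    refine ⟨hi1.symm, ?_⟩
    simp [hD, dirD, e1, e2, e3, hvnu, hvnw, hFv, hi3]
  have oOV : ∀ v : V, Fp v → o v (ov v) := by
    intro v hFv
    obtain ⟨ho1, ho2, ho3, hi1, hi2, hi3⟩ := hpv v hFv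
    obtain ⟨hvu', hvw', hvnu, hvnw⟩ := id hFv
    have e1 : ov v ≠ w := fun hh => G.irrefl (hh ▸ ho2)
    have e2 : ¬ Fp (ov v) := fun hF => hF.2.1 ho2
    refine ⟨ho1, ?_⟩
    simp [hD, dirD, hvnu, hvnw, ho3, e1, e2, hFv]
  -- reachability
  have reach : ∀ v : V, DPathLE o 4 u v ∧ DPathLE o 4 v u := by
    intro v
    by_cases hvu : v = u
    · rw [hvu]
      exact ⟨dpath_mono (dpath_zero o u) (by omega), dpath_mono (dpath_zero o u) (by omega)⟩
    by_cases hvw : v = w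
    · rw [hvw]
      obtain ⟨c, hc1, hc2⟩ := common_nbr0 G h u w
      have hcw : c ≠ w := fun hh => G.irrefl (hh ▸ hc2)
      have hcu : c ≠ u := fun hh => G.irrefl (hh ▸ hc1)
      exact ⟨dpath_mono (dpath_comp (dpath_one (oUC c hc1 hcw)) (dpath_one (oCW c hc2 hcu)))
          (by omega),
        dpath_mono (dpath_one oWU) (by omega)⟩
    by_cases hU : G.Adj u v
    · by_cases hW : G.Adj w v
      · exact ⟨dpath_mono (dpath_one (oUC v hU hvw)) (by omega),
          dpath_mono (dpath_comp (dpath_one (oCW v hW hvu)) (dpath_one oWU)) (by omega)⟩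
      · obtain ⟨c, hc1, hc2, hc3⟩ := common_nbr G h v w v w hvw G.irrefl hW
          (fun hh => hW hh.symm) G.irrefl u
        exact ⟨dpath_mono (dpath_one (oUC v hU hvw)) (by omega),
          dpath_mono (dpath_comp (dpath_comp (dpath_one (oVC v c hU hW hvw hc1 hc2 hc3))
            (dpath_one (oCW c hc2 hc3))) (dpath_one oWU)) (by omega)⟩
    · by_cases hW : G.Adj w v
      · obtain ⟨c, hc1, hc2, hc3⟩ := common_nbr G h u v u v (Ne.symm hvu) G.irrefl
          (fun hh => hU hh.symm) hU G.irrefl w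
        exact ⟨dpath_mono (dpath_comp (dpath_one (oUC c hc1 hc3))
            (dpath_one (oCV c v hc1 hc3 hU hW hvu hc2.symm))) (by omega),
          dpath_mono (dpath_comp (dpath_one (oCW v hW hvu)) (dpath_one oWU)) (by omega)⟩
      · have hFv : Fp v := ⟨hU, hW, hvu, hvw⟩
        obtain ⟨ho1, ho2, ho3, hi1, hi2, hi3⟩ := hpv v hFv
        exact ⟨dpath_mono (dpath_comp
            (dpath_one (oUC (iv v) hi2 (fun hh => hW (hh ▸ hi1).symm)))
            (dpath_one (oIV v hFv))) (by omega),
          dpath_mono (dpath_comp (dpath_comp (dpath_one (oOV v hFv))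
            (dpath_one (oCW (ov v) ho2 ho3))) (dpath_one oWU)) (by omega)⟩
  refine ⟨⟨o, horient, u, reach⟩, ⟨o, horient, fun x y => ?_⟩⟩
  exact dpath_mono (dpath_comp (reach x).2 (reach y).1) (by omega)
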